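/- Let N ≥ 2, R > 0, and let u : B_R → (0,∞) be continuous. Suppose there exists a linear isometry M ∈ O(N) such that, with u_M(x) = u(M⁻¹x): for every α ∈ (0,R] and h ∈ [−α,α], u_M is constant on {x ∈ ℝ^N : |x| = α and x_N = h}, and for every α ∈ (0,R] the function θ ↦ u_M(0,…,0, α cos θ, α sin θ) is nonincreasing for θ ∈ [π/2, 3π/2]. Then u is separable in B_R. -/

import Mathlib

open scoped RealInnerProductSpace

/-- The point `(0,…,0, cos θ, sin θ)` of `ℝ^N`. -/
noncomputable def circlePoint (N : ℕ) (θ : ℝ) : EuclideanSpace ℝ (Fin N) :=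
  (EuclideanSpace.equiv (Fin N) ℝ).symm fun i =>
    if (i : ℕ) = N - 2 then Real.cos θ else if (i : ℕ) = N - 1 then Real.sin θ else 0

/-- The reflection of `ℝ^N` across the hyperplane `{x : ⟪a,x⟫ = 0}` through the
origin, bounding the open half-space `H = {x : ⟪a,x⟫ > 0}`. -/
noncomputable def reflectHyp0 {E : Type*} [NormedAddCommGroup E] [InnerProductSpace ℝ E]
    (a : E) (x : E) : E :=
  x - ((2 * ⟪a, x⟫) / ⟪a, a⟫) • a

section aux

lemma circlePoint_apply (N : ℕ) (θ : ℝ) (i : Fin N) :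
    circlePoint N θ i =
      if (i : ℕ) = N - 2 then Real.cos θ else if (i : ℕ) = N - 1 then Real.sin θ else 0 := rfl

lemma circlePoint_norm (N : ℕ) (hN : 2 ≤ N) (θ : ℝ) : ‖circlePoint N θ‖ = 1 := by
  have h : circlePoint N θ =
      EuclideanSpace.single (⟨N - 2, by omega⟩ : Fin N) (Real.cos θ)
        + EuclideanSpace.single (⟨N - 1, by omega⟩ : Fin N) (Real.sin θ) := by
    ext i
    have hne : ¬(N - 1 = N - 2) := by omega
    simp only [circlePoint_apply, PiLp.add_apply, EuclideanSpace.single_apply,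
      Fin.ext_iff, Fin.val_mk]
    by_cases h0 : (i : ℕ) = N - 2
    · have h1 : ¬(i : ℕ) = N - 1 := by omega
      simp [h0, h1, hne, eq_comm]
    · by_cases h1 : (i : ℕ) = N - 1 <;> simp [h0, h1, hne, eq_comm]
  have hne : (⟨N - 2, by omega⟩ : Fin N) ≠ ⟨N - 1, by omega⟩ := by
    intro h; apply_fun (fun x => (x : ℕ)) at h; simp at h; omega
  have horth : ⟪EuclideanSpace.single (⟨N - 2, by omega⟩ : Fin N) (Real.cos θ),
      EuclideanSpace.single (⟨N - 1, by omega⟩ : Fin N) (Real.sin θ)⟫ = 0 := by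
    rw [EuclideanSpace.inner_single_left]
    simp [EuclideanSpace.single_apply, hne]
  have := norm_add_sq_real (EuclideanSpace.single (⟨N - 2, by omega⟩ : Fin N) (Real.cos θ))
    (EuclideanSpace.single (⟨N - 1, by omega⟩ : Fin N) (Real.sin θ))
  rw [horth] at this
  have hsq : ‖circlePoint N θ‖ ^ 2 = 1 := by
    rw [h, this, EuclideanSpace.norm_single, EuclideanSpace.norm_single,
      Real.norm_eq_abs, Real.norm_eq_abs, sq_abs, sq_abs]
    nlinarith [Real.sin_sq_add_cos_sq θ]
  nlinarith [norm_nonneg (circlePoint N θ)]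

lemma circlePoint_last (N : ℕ) (hN : 2 ≤ N) (θ : ℝ) :
    circlePoint N θ (⟨N - 1, Nat.sub_lt (by omega) Nat.one_pos⟩ : Fin N) = Real.sin θ := by
  rw [circlePoint_apply]
  have hne : ¬(N - 1 = N - 2) := by omega
  rw [if_neg hne, if_pos rfl]

end aux

/-- A continuous positive function on the closed ball `B_R` which, after
an orthogonal change of coordinates `M`, is axially symmetric with respect to the
`x_N`-axis and monotone (nonincreasing in the latitude angle) on each sphere of radius
`α ∈ (0,R]`, is separable in `B_R`. -/
theorem stmt_10 (N : ℕ) (hN : 2 ≤ N) (R : ℝ) (hR : 0 < R)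
    (u : EuclideanSpace ℝ (Fin N) → ℝ)
    (hcont : ContinuousOn u (Metric.closedBall (0 : EuclideanSpace ℝ (Fin N)) R))
    (hpos : ∀ x ∈ Metric.closedBall (0 : EuclideanSpace ℝ (Fin N)) R, 0 < u x)
    (M : EuclideanSpace ℝ (Fin N) ≃ₗᵢ[ℝ] EuclideanSpace ℝ (Fin N))
    (hax : ∀ α ∈ Set.Ioc (0 : ℝ) R, ∀ h ∈ Set.Icc (-α) α,
        ∀ x y : EuclideanSpace ℝ (Fin N), ‖x‖ = α → ‖y‖ = α →
          x ⟨N - 1, by omega⟩ = h → y ⟨N - 1, by omega⟩ = h →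
          u (M.symm x) = u (M.symm y))
    (hmono : ∀ α ∈ Set.Ioc (0 : ℝ) R,
        AntitoneOn (fun θ => u (M.symm (α • circlePoint N θ)))
          (Set.Icc (Real.pi / 2) (3 * Real.pi / 2))) :
    ∀ a : EuclideanSpace ℝ (Fin N), a ≠ 0 →
      (∀ x ∈ Metric.closedBall (0 : EuclideanSpace ℝ (Fin N)) R,
        0 < ⟪a, x⟫ → u (reflectHyp0 a x) ≤ u x) ∨
      (∀ x ∈ Metric.closedBall (0 : EuclideanSpace ℝ (Fin N)) R,
        0 < ⟪a, x⟫ → u x ≤ u (reflectHyp0 a x)) := by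
  intro a ha
  set i₁ : Fin N := ⟨N - 1, by omega⟩ with hi₁
  set b : EuclideanSpace ℝ (Fin N) := M.symm (EuclideanSpace.single i₁ (1 : ℝ)) with hb
  have hbx : ∀ x : EuclideanSpace ℝ (Fin N), ⟪b, x⟫ = M x i₁ := by
    intro x
    rw [hb, ← LinearIsometryEquiv.inner_map_map M (M.symm (EuclideanSpace.single i₁ (1 : ℝ))) x,
      LinearIsometryEquiv.apply_symm_apply, EuclideanSpace.inner_single_left]
    simp
  have hbnorm : ‖b‖ = 1 := by
    rw [hb, LinearIsometryEquiv.norm_map, EuclideanSpace.norm_single]; norm_num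
  have hbnd : ∀ z : EuclideanSpace ℝ (Fin N), |⟪b, z⟫| ≤ ‖z‖ := by
    intro z
    have := abs_real_inner_le_norm b z
    rwa [hbnorm, one_mul] at this
  -- key monotonicity lemma
  have key : ∀ x y : EuclideanSpace ℝ (Fin N), ‖x‖ ≤ R → 0 < ‖x‖ → ‖y‖ = ‖x‖ →
      ⟪b, y⟫ ≤ ⟪b, x⟫ → u y ≤ u x := by
    intro x y hxR hx0 hyx hle
    set α := ‖x‖ with hα
    have hαR : α ∈ Set.Ioc (0 : ℝ) R := ⟨hx0, hxR⟩
    set θf : ℝ → ℝ := fun h => Real.pi / 2 + Real.arccos (h / α) with hθf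
    have hmem : ∀ h : ℝ, θf h ∈ Set.Icc (Real.pi / 2) (3 * Real.pi / 2) := by
      intro h
      constructor
      · have := Real.arccos_nonneg (h / α); simp [hθf]; linarith
      · have := Real.arccos_le_pi (h / α); simp [hθf]; linarith
    have hdiv : ∀ h : ℝ, |h| ≤ α → -1 ≤ h / α ∧ h / α ≤ 1 := by
      intro h hh
      rw [abs_le] at hh
      constructor
      · rw [le_div_iff₀ hx0]; linarith
      · rw [div_le_one hx0]; linarith
    have hsin : ∀ h : ℝ, |h| ≤ α → Real.sin (θf h) = h / α := by
      intro h hh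
      obtain ⟨h1, h2⟩ := hdiv h hh
      rw [hθf]
      simp [Real.sin_add, Real.cos_arccos h1 h2]
    have hval : ∀ z : EuclideanSpace ℝ (Fin N), ‖z‖ = α →
        u z = u (M.symm (α • circlePoint N (θf ⟪b, z⟫))) := by
      intro z hz
      have hbz : |⟪b, z⟫| ≤ α := hz ▸ hbnd z
      have h1 : u (M.symm (M z)) = u (M.symm (α • circlePoint N (θf ⟪b, z⟫))) := by
        apply hax α hαR ⟪b, z⟫ (Set.mem_Icc.mpr (abs_le.mp hbz))
        · rw [LinearIsometryEquiv.norm_map]; exact hz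
        · rw [norm_smul, circlePoint_norm N hN, Real.norm_eq_abs, abs_of_pos hx0, mul_one]
        · exact (hbx z).symm
        · show (α • circlePoint N (θf ⟪b, z⟫)) i₁ = ⟪b, z⟫
          rw [PiLp.smul_apply, hi₁, circlePoint_last N hN, smul_eq_mul,
            hsin ⟪b, z⟫ hbz]
          field_simp
      rwa [LinearIsometryEquiv.symm_apply_apply] at h1
    have hθle : θf ⟪b, x⟫ ≤ θf ⟪b, y⟫ := by
      have hbx' : |⟪b, x⟫| ≤ α := hbnd x
      have hby' : |⟪b, y⟫| ≤ α := hyx ▸ hbnd y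
      have : Real.arccos (⟪b, x⟫ / α) ≤ Real.arccos (⟪b, y⟫ / α) := by
        rw [Real.arccos, Real.arccos]
        have : Real.arcsin (⟪b, y⟫ / α) ≤ Real.arcsin (⟪b, x⟫ / α) :=
          Real.monotone_arcsin ((div_le_div_iff_of_pos_right hx0).mpr hle)
        linarith
      simp only [hθf]; linarith
    have := hmono α hαR (hmem ⟪b, x⟫) (hmem ⟪b, y⟫) hθle
    calc u y = u (M.symm (α • circlePoint N (θf ⟪b, y⟫))) := hval y hyx
      _ ≤ u (M.symm (α • circlePoint N (θf ⟪b, x⟫))) := this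
      _ = u x := (hval x rfl).symm
  -- reflection facts
  have hanorm : (0:ℝ) < ‖a‖ := norm_pos_iff.mpr ha
  have haa' : (0:ℝ) < ⟪a, a⟫ := by
    rw [real_inner_self_eq_norm_sq]; positivity
  have haa : ⟪a, a⟫ ≠ 0 := ne_of_gt haa'
  have hnormr : ∀ x : EuclideanSpace ℝ (Fin N), ‖reflectHyp0 a x‖ = ‖x‖ := by
    intro x
    have h1 : ⟪reflectHyp0 a x, reflectHyp0 a x⟫ = ⟪x, x⟫ := by
      have expand : ∀ (X p q : ℝ), q ≠ 0 →
          X - 2 * p / q * p - 2 * p / q * p + 2 * p / q * (2 * p / q * q) = X := by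
        intros X p q hq; field_simp; ring
      unfold reflectHyp0
      rw [inner_sub_sub_self]
      simp only [real_inner_smul_left, real_inner_smul_right]
      rw [real_inner_comm x a]
      exact expand _ _ _ haa
    have h2 := real_inner_self_eq_norm_sq (reflectHyp0 a x)
    have h3 := real_inner_self_eq_norm_sq x
    nlinarith [norm_nonneg (reflectHyp0 a x), norm_nonneg x]
  have hinnerr : ∀ x : EuclideanSpace ℝ (Fin N),
      ⟪b, reflectHyp0 a x⟫ = ⟪b, x⟫ - (2 * ⟪a, x⟫ / ⟪a, a⟫) * ⟪a, b⟫ := by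
    intro x
    unfold reflectHyp0
    rw [inner_sub_right, real_inner_smul_right, real_inner_comm b a]
  rcases le_or_gt 0 ⟪a, b⟫ with hab | hab
  · left
    intro x hx hax0
    have hxR : ‖x‖ ≤ R := by simpa [Metric.mem_closedBall, dist_zero_right] using hx
    have hx0 : 0 < ‖x‖ := by
      rcases eq_or_ne x 0 with rfl | hxne
      · simp at hax0
      · exact norm_pos_iff.mpr hxne
    refine key x (reflectHyp0 a x) hxR hx0 (hnormr x) ?_
    rw [hinnerr x]
    have : 0 ≤ (2 * ⟪a, x⟫ / ⟪a, a⟫) * ⟪a, b⟫ :=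
      mul_nonneg (by positivity) hab
    linarith
  · right
    intro x hx hax0
    have hxR : ‖x‖ ≤ R := by simpa [Metric.mem_closedBall, dist_zero_right] using hx
    have hx0 : 0 < ‖x‖ := by
      rcases eq_or_ne x 0 with rfl | hxne
      · simp at hax0
      · exact norm_pos_iff.mpr hxne
    refine key (reflectHyp0 a x) x (by rw [hnormr]; exact hxR) (by rw [hnormr]; exact hx0)
      (hnormr x).symm ?_
    rw [hinnerr x]
    have : (2 * ⟪a, x⟫ / ⟪a, a⟫) * ⟪a, b⟫ ≤ 0 :=
      mul_nonpos_of_nonneg_of_nonpos (by positivity) hab.le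
    linarith
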